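/- Every paramedial AG-band is a CA-AG-groupoid; that is, if a magma S satisfies the left invertive law, the paramedial law (a·b)·(c·d) = (d·b)·(c·a), and every element is idempotent (a·a = a for all a), then S satisfies cyclic associativity a·(b·c) = c·(a·b) for all a,b,c. -/
import Mathlib

theorem paramedial_AG_band_is_CA_AG_groupoid {S : Type*} [Mul S]
    (li : ∀ a b c : S, (a * b) * c = (c * b) * a)
    (pm : ∀ a b c d : S, (a * b) * (c * d) = (d * b) * (c * a))
    (idem : ∀ a : S, a * a = a) :
    ∀ a b c : S, a * (b * c) = c * (a * b) := by
  have assoc : ∀ a b c : S, a * (b * c) = (a * b) * c := by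
    intro a b c
    calc a * (b * c) = (a * a) * (b * c) := by rw [idem]
      _ = (c * a) * (b * a) := pm a a b c
      _ = ((b * a) * a) * c := li c a (b * a)
      _ = ((a * a) * b) * c := by rw [li b a a]
      _ = (a * b) * c := by rw [idem]
  have comm : ∀ a b : S, a * b = b * a := by
    intro a b
    calc a * b = (a * a) * b := by rw [idem]
      _ = (b * a) * a := li a a b
      _ = b * (a * a) := (assoc b a a).symm
      _ = b * a := by rw [idem]
  intro a b c
  rw [assoc, comm]
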